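/- Let p be a prime and R an admissible ring. Then the ring homomorphism 𝕎 R → 𝕎(R_red) induced by the quotient map R → R_red admits a ring-homomorphism section: there exists a ring homomorphism s : 𝕎(R_red) → 𝕎 R such that the composite 𝕎(R_red) → 𝕎 R → 𝕎(R_red) is the identity. -/

import Mathlib

open WittVector

/-- A `p`-nilpotent commutative ring `R` is admissible if `R_red := R ⧸ nilradical R` is a
perfect ring of characteristic `p` and the nilradical of `R/pR` is killed by a power of
Frobenius. -/
def IsAdmissible (p : ℕ) (R : Type*) [CommRing R] : Prop :=
  (∃ N : ℕ, (p : R) ^ N = 0) ∧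
  CharP (R ⧸ nilradical R) p ∧
  Function.Bijective (fun a : R ⧸ nilradical R => a ^ p) ∧
  ∃ m : ℕ, ∀ a ∈ nilradical (R ⧸ Ideal.span {(p : R)}), a ^ p ^ m = 0

section Aux

variable {p : ℕ} [hp : Fact p.Prime] {R : Type*} [CommRing R]

/-- Evaluating an integral polynomial with zero constant term at elements of an ideal
lands in the ideal. -/
lemma aeval_mem_of_constantCoeff_eq_zero {S : Type*} [CommRing S] (I : Ideal S) (x : ℕ → S)
    (hx : ∀ i, x i ∈ I) (φ : MvPolynomial ℕ ℤ) (hφ : MvPolynomial.constantCoeff φ = 0) :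
    MvPolynomial.aeval x φ ∈ I := by
  rw [← Ideal.Quotient.eq_zero_iff_mem]
  have h := MvPolynomial.map_aeval x (Ideal.Quotient.mk I) φ
  have hx0 : (fun i => Ideal.Quotient.mk I (x i)) = (fun _ => (0 : S ⧸ I)) :=
    funext fun i => Ideal.Quotient.eq_zero_iff_mem.mpr (hx i)
  rw [hx0, MvPolynomial.eval₂Hom_zero'_apply, hφ] at h
  simpa using h

lemma constantCoeff_frobeniusPoly (n : ℕ) :
    MvPolynomial.constantCoeff (frobeniusPoly p n) = 0 := by
  have h0 : (frobenius (0 : WittVector p ℤ)).coeff n = 0 := by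
    rw [map_zero, zero_coeff]
  rw [coeff_frobenius] at h0
  have hc : (0 : WittVector p ℤ).coeff = (fun _ => (0 : ℤ)) :=
    funext fun i => zero_coeff p ℤ i
  rw [hc, MvPolynomial.aeval_zero'] at h0
  simpa using h0

lemma constantCoeff_frobeniusPolyAux (n : ℕ) :
    MvPolynomial.constantCoeff (frobeniusPolyAux p n) = 0 := by
  have h := constantCoeff_frobeniusPoly (p := p) n
  rw [frobeniusPoly] at h
  simp only [map_add, map_pow, map_mul, MvPolynomial.constantCoeff_X,
    MvPolynomial.constantCoeff_C, zero_pow hp.out.ne_zero, zero_add] at h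
  exact (mul_eq_zero.mp h).resolve_left (by exact_mod_cast hp.out.ne_zero)

/-- Key formula: `(frobenius x).coeff n = x.coeff n ^ p + p * c` where `c` lies in any ideal
containing all the coefficients of `x`. -/
lemma frobenius_coeff_eq (x : WittVector p R) (I : Ideal R) (hx : ∀ n, x.coeff n ∈ I) (n : ℕ) :
    ∃ c ∈ I, (frobenius x).coeff n = x.coeff n ^ p + (p : R) * c := by
  refine ⟨MvPolynomial.aeval x.coeff (frobeniusPolyAux p n),
    aeval_mem_of_constantCoeff_eq_zero I _ hx _ (constantCoeff_frobeniusPolyAux n), ?_⟩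
  rw [coeff_frobenius, frobeniusPoly]
  simp [MvPolynomial.aeval_X, MvPolynomial.aeval_C]

/-- The crucial nilpotence statement: a large enough power of Frobenius kills every Witt
vector all of whose coefficients are nilpotent. -/
lemma frobenius_iterate_eq_zero {N m : ℕ} (hN : (p : R) ^ N = 0)
    (hm : ∀ a ∈ nilradical (R ⧸ Ideal.span {(p : R)}), a ^ p ^ m = 0)
    (z : WittVector p R) (hz : ∀ n, z.coeff n ∈ nilradical R) :
    (⇑(frobenius : WittVector p R →+* WittVector p R))^[m + N] z = 0 := by
  set F : WittVector p R → WittVector p R := ⇑(frobenius : WittVector p R →+* WittVector p R)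
    with hF
  have hnil : ∀ j n, (F^[j] z).coeff n ∈ nilradical R := by
    intro j
    induction j with
    | zero => simpa using hz
    | succ j ih =>
      intro n
      rw [Function.iterate_succ_apply']
      obtain ⟨c, hc, heq⟩ := frobenius_coeff_eq (F^[j] z) (nilradical R) ih n
      rw [hF, heq]
      exact add_mem (Ideal.pow_mem_of_mem _ (ih n) p hp.out.pos) (Ideal.mul_mem_left _ _ hc)
  set q := Ideal.Quotient.mk (Ideal.span {(p : R)}) with hqdef
  have hq0 : q (p : R) = 0 :=
    Ideal.Quotient.eq_zero_iff_mem.mpr (Ideal.mem_span_singleton_self _)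
  have hA : ∀ j n, q ((F^[j] z).coeff n) = q (z.coeff n) ^ p ^ j := by
    intro j
    induction j with
    | zero => intro n; simp
    | succ j ih =>
      intro n
      rw [Function.iterate_succ_apply']
      obtain ⟨c, -, heq⟩ := frobenius_coeff_eq (F^[j] z) ⊤ (fun _ => trivial) n
      rw [hF, heq, map_add, map_mul, hq0, zero_mul, add_zero, map_pow, ih, ← pow_mul,
        ← pow_succ]
  have hBase : ∀ n, (F^[m] z).coeff n ∈ Ideal.span {(p : R) ^ (0 + 1)} := by
    intro n
    rw [zero_add, pow_one, ← Ideal.Quotient.eq_zero_iff_mem, hA]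
    exact hm _ (mem_nilradical.mpr ((mem_nilradical.mp (hz n)).map q))
  have hB : ∀ j n, (F^[m + j] z).coeff n ∈ Ideal.span {(p : R) ^ (j + 1)} := by
    intro j
    induction j with
    | zero => simpa using hBase
    | succ j ih =>
      intro n
      rw [show m + (j + 1) = (m + j) + 1 from rfl, Function.iterate_succ_apply']
      obtain ⟨c, hc, heq⟩ :=
        frobenius_coeff_eq (F^[m + j] z) (Ideal.span {(p : R) ^ (j + 1)}) ih n
      rw [hF, heq, Ideal.mem_span_singleton]
      have h1 : (p : R) ^ (j + 1 + 1) ∣ (F^[m + j] z).coeff n ^ p := by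
        refine dvd_trans ?_ (pow_dvd_pow_of_dvd (Ideal.mem_span_singleton.mp (ih n)) p)
        rw [← pow_mul]
        refine pow_dvd_pow _ ?_
        nlinarith [hp.out.two_le]
      have h2 : (p : R) ^ (j + 1 + 1) ∣ (p : R) * c := by
        obtain ⟨r, hr⟩ := Ideal.mem_span_singleton.mp hc
        refine ⟨r, ?_⟩
        rw [hr, pow_succ]
        ring
      exact dvd_add h1 h2
  have hall : ∀ n, (F^[m + N] z).coeff n = 0 := by
    intro n
    have h := hB N n
    rw [pow_succ, hN, zero_mul, Ideal.mem_span_singleton, zero_dvd_iff] at h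
    exact h
  ext n
  rw [hall n, zero_coeff]

end Aux

/-- `WittVector.map` commutes with powers of Frobenius. -/
lemma map_frobenius_pow {p : ℕ} [hp : Fact p.Prime] {R S : Type u} [CommRing R] [CommRing S]
    (f : R →+* S) (M : ℕ) (x : WittVector p R) :
    WittVector.map f (((frobenius : WittVector p R →+* WittVector p R) ^ M) x)
      = ((frobenius : WittVector p S →+* WittVector p S) ^ M) (WittVector.map f x) := by
  induction M generalizing x with
  | zero => simp
  | succ M ih =>
    simp only [pow_succ, RingHom.mul_def, RingHom.comp_apply]
    rw [← WittVector.IsPoly.map (frobenius_isPoly p) f x]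
    exact ih _

/-- If `R` is admissible, the ring homomorphism `𝕎 R → 𝕎 (R_red)` admits a ring-homomorphism
section. -/
theorem wittVector_map_nilradical_section (p : ℕ) [Fact p.Prime] (R : Type*) [CommRing R]
    (hR : IsAdmissible p R) :
    ∃ s : WittVector p (R ⧸ nilradical R) →+* WittVector p R,
      (WittVector.map (Ideal.Quotient.mk (nilradical R))).comp s = RingHom.id _ := by
  obtain ⟨⟨N, hN⟩, hchar, hbij, m, hm⟩ := hR
  haveI : CharP (R ⧸ nilradical R) p := hchar
  haveI : ExpChar (R ⧸ nilradical R) p := .prime Fact.out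
  haveI : PerfectRing (R ⧸ nilradical R) p := by
    constructor
    have h : ⇑(_root_.frobenius (R ⧸ nilradical R) p) = fun a => a ^ p :=
      funext fun a => frobenius_def p a
    exact hbij
  set k := R ⧸ nilradical R with hk
  set π : R →+* k := Ideal.Quotient.mk (nilradical R) with hπ
  set Wπ : WittVector p R →+* WittVector p k := WittVector.map π with hWπ
  have hsurj : Function.Surjective Wπ := map_surjective π Ideal.Quotient.mk_surjective
  set M := m + N with hM
  set FR : WittVector p R →+* WittVector p R :=
    (frobenius : WittVector p R →+* WittVector p R) ^ M with hFR
  set Fk : WittVector p k →+* WittVector p k :=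
    (frobenius : WittVector p k →+* WittVector p k) ^ M with hFk
  -- the kernel of Wπ is killed by FR
  have hker : ∀ z ∈ RingHom.ker Wπ, FR z = 0 := by
    intro z hzk
    have hz : ∀ n, z.coeff n ∈ nilradical R := by
      intro n
      rw [← Ideal.Quotient.eq_zero_iff_mem]
      have h0 : Wπ z = 0 := hzk
      have h1 := congrArg (fun w => WittVector.coeff w n) h0
      simpa [hWπ, map_coeff] using h1
    have : (⇑FR) z = 0 := by
      rw [hFR, RingHom.coe_pow]
      exact frobenius_iterate_eq_zero hN hm z hz
    exact this
  set J := RingHom.ker Wπ with hJ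
  set e := RingHom.quotientKerEquivOfSurjective hsurj with he'
  set g : WittVector p k →+* WittVector p R :=
    (Ideal.Quotient.lift J FR hker).comp e.symm.toRingHom with hg'
  have he : ∀ x : WittVector p R, e (Ideal.Quotient.mk J x) = Wπ x := by
    intro x
    rw [he']
    rw [RingHom.quotientKerEquivOfSurjective]
    rw [RingHom.quotientKerEquivOfRightInverse.apply]
    exact RingHom.kerLift_mk Wπ x
  have hg : ∀ x, g (Wπ x) = FR x := by
    intro x
    have h1 : e.symm (Wπ x) = Ideal.Quotient.mk J x := by
      apply e.injective
      rw [RingEquiv.apply_symm_apply, he]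
    rw [hg', RingHom.comp_apply, RingEquiv.toRingHom_eq_coe, RingHom.coe_coe, h1,
      Ideal.Quotient.lift_mk]
  have hcomm : ∀ x, Wπ (FR x) = Fk (Wπ x) := by
    intro x
    rw [hFR, hFk, hWπ]
    exact map_frobenius_pow π M x
  have hFkbij : Function.Bijective Fk := by
    rw [hFk]
    have : (⇑((frobenius : WittVector p k →+* WittVector p k) ^ M))
        = (⇑(frobenius : WittVector p k →+* WittVector p k))^[M] := RingHom.coe_pow _ M
    rw [show (Function.Bijective ⇑((frobenius : WittVector p k →+* WittVector p k) ^ M))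
        = Function.Bijective ((⇑(frobenius : WittVector p k →+* WittVector p k))^[M])
        from congrArg _ this]
    exact (frobenius_bijective p k).iterate M
  set u := (RingEquiv.ofBijective Fk hFkbij).symm with hu
  refine ⟨g.comp u.toRingHom, ?_⟩
  refine RingHom.ext fun x => ?_
  have h1 : u.toRingHom x = u x := rfl
  obtain ⟨z', hz'⟩ := hsurj (u x)
  calc (WittVector.map (Ideal.Quotient.mk (nilradical R))).comp (g.comp u.toRingHom) x
      = Wπ (g (u x)) := rfl
    _ = Wπ (g (Wπ z')) := by rw [hz']
    _ = Wπ (FR z') := by rw [hg]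
    _ = Fk (Wπ z') := hcomm z'
    _ = Fk (u x) := by rw [hz']
    _ = (RingEquiv.ofBijective Fk hFkbij) (u x) := rfl
    _ = x := by rw [hu, RingEquiv.apply_symm_apply]
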